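/- For every finite, simple, connected, undirected graph G and every positive integer K: if the cop number c(G) equals K, then the concurrent cop number satisfies c̃(G) ≤ K. -/

import Mathlib

open Finset Filter

noncomputable section

variable {V : Type*} [Fintype V] [DecidableEq V]

/-- The closed neighborhood `N[u]` of a vertex `u`: `u` together with its neighbors. -/
def nbhd (G : SimpleGraph V) [DecidableRel G.Adj] (u : V) : Finset V :=
  insert u (G.neighborFinset u)

lemma nbhd_nonempty (G : SimpleGraph V) [DecidableRel G.Adj] (u : V) :
    (nbhd G u).Nonempty :=
  ⟨u, Finset.mem_insert_self u _⟩

/-! ### The turn-based cops and robber game (TBCR) with `K` cops -/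

/-- A position of the `K`-cop game: the cops' locations and the robber's location. -/
abbrev PosK (V : Type*) (K : ℕ) := (Fin K → V) × V

/-- A (deterministic, history-dependent) cop strategy for TBCR: an initial placement
of the `K` cops, and a move function from histories of completed rounds. -/
abbrev TBCop (V : Type*) (K : ℕ) := (Fin K → V) × (List (PosK V K) → Fin K → V)

/-- A (deterministic, history-dependent) robber strategy for TBCR: an initial placement
(seeing the cops' placement), and a move function from histories of completed rounds
together with the cops' fresh move (the cop player moves first in each round). -/
abbrev TBRob (V : Type*) (K : ℕ) := ((Fin K → V) → V) × (List (PosK V K) → (Fin K → V) → V)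

/-- The history of completed rounds of TBCR after round `t`; each token must move within its
closed neighborhood (attempted illegal moves leave the token in place). -/
def tbPlay (G : SimpleGraph V) [DecidableRel G.Adj] {K : ℕ}
    (sc : TBCop V K) (sr : TBRob V K) : ℕ → List (PosK V K)
  | 0 => [(sc.1, sr.1 sc.1)]
  | (t+1) =>
    let h := tbPlay G sc sr t
    let p := h.getLast?.getD (sc.1, sr.1 sc.1)
    let c' : Fin K → V := fun i => if sc.2 h i ∈ nbhd G (p.1 i) then sc.2 h i else p.1 i
    let w := sr.2 h c'
    h ++ [(c', if w ∈ nbhd G p.2 then w else p.2)]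

/-- The position of the TBCR game at the end of round `t`. -/
def tbPos (G : SimpleGraph V) [DecidableRel G.Adj] {K : ℕ}
    (sc : TBCop V K) (sr : TBRob V K) (t : ℕ) : PosK V K :=
  (tbPlay G sc sr t).getLast?.getD (sc.1, sr.1 sc.1)

/-- The robber is captured in TBCR: at some time a cop occupies the robber's current
vertex (either at the end of a round, or just after the cops' half of a round). -/
def tbCaptured (G : SimpleGraph V) [DecidableRel G.Adj] {K : ℕ}
    (sc : TBCop V K) (sr : TBRob V K) : Prop :=
  ∃ t : ℕ, ∃ i : Fin K,
    (tbPos G sc sr t).1 i = (tbPos G sc sr t).2 ∨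
    (tbPos G sc sr (t+1)).1 i = (tbPos G sc sr t).2

/-- `K` cops suffice in the turn-based game: the cop player has a strategy guaranteeing
capture against every robber strategy. -/
def tbCopWin (G : SimpleGraph V) [DecidableRel G.Adj] (K : ℕ) : Prop :=
  ∃ sc : TBCop V K, ∀ sr : TBRob V K, tbCaptured G sc sr

/-- The cop number `c(G)`: the minimum `K` for which the cop player wins TBCR. -/
def copNumber (G : SimpleGraph V) [DecidableRel G.Adj] : ℕ :=
  sInf {K | tbCopWin G K}

/-! ### The concurrent cops and robber game (CCCR) with `K` cops -/

/-- A randomized cop strategy in CCCR: to each finite history it assigns a probability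
distribution over the cops' next moves. -/
abbrev CCCop (V : Type*) (K : ℕ) := List (PosK V K) → PMF (Fin K → V)

/-- A randomized robber strategy in CCCR. -/
abbrev CCRob (V : Type*) (K : ℕ) := List (PosK V K) → PMF V

/-- A strategy is memoryless if the distribution it assigns depends only on the
current (i.e. most recent) position. -/
def MemorylessK {K : ℕ} (π : List (PosK V K) → PMF (Fin K → V)) : Prop :=
  ∀ h₁ h₂ : List (PosK V K), h₁.getLast? = h₂.getLast? → π h₁ = π h₂

/-- The CCCR transition function for `K` cops: both players move simultaneously, each
token within its closed neighborhood (illegal moves are ignored); a capture position is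
absorbing; if a cop and the robber swap adjacent vertices, the robber is captured
\"en passant\". -/
def ccStep (G : SimpleGraph V) [DecidableRel G.Adj] {K : ℕ}
    (p : PosK V K) (u : Fin K → V) (w : V) : PosK V K :=
  if ∃ i, p.1 i = p.2 then p
  else
    let u' : Fin K → V := fun i => if u i ∈ nbhd G (p.1 i) then u i else p.1 i
    let w' : V := if w ∈ nbhd G p.2 then w else p.2
    if ∃ i, u' i = p.2 ∧ w' = p.1 i then (u', p.2) else (u', w')

/-- The distribution over histories of the first `t+1` positions of CCCR, induced by a
pair of randomized strategies and an initial position. -/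
def ccPlay (G : SimpleGraph V) [DecidableRel G.Adj] {K : ℕ}
    (πC : CCCop V K) (πR : CCRob V K) (init : PosK V K) : ℕ → PMF (List (PosK V K))
  | 0 => PMF.pure [init]
  | (t+1) => (ccPlay G πC πR init t).bind fun h =>
      (πC h).bind fun u => (πR h).bind fun w =>
        PMF.pure (h ++ [ccStep G (h.getLast?.getD init) u w])

/-- The probability that the robber is still free (not captured) after round `t`. -/
def ccFreeProb (G : SimpleGraph V) [DecidableRel G.Adj] {K : ℕ}
    (πC : CCCop V K) (πR : CCRob V K) (init : PosK V K) (t : ℕ) : ENNReal :=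
  (ccPlay G πC πR init t).toOuterMeasure
    {h | ∀ i, (h.getLast?.getD init).1 i ≠ (h.getLast?.getD init).2}

/-- `K` cops suffice in the concurrent game: the cop player has a strategy ensuring
that, from every initial position and against every robber strategy, capture occurs
with probability one (the set of infinite histories avoiding capture has probability
zero). -/
def ccCopWin (G : SimpleGraph V) [DecidableRel G.Adj] (K : ℕ) : Prop :=
  ∃ πC : CCCop V K, ∀ init : PosK V K, ∀ πR : CCRob V K,
    (⨅ t : ℕ, ccFreeProb G πC πR init t) = 0

/-- The concurrent cop number `c̃(G)`. -/
def ccopNumber (G : SimpleGraph V) [DecidableRel G.Adj] : ℕ :=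
  sInf {K | ccCopWin G K}


/-! ### Auxiliary development for the proof -/

section CRProof

open scoped Classical

variable (G : SimpleGraph V) [DecidableRel G.Adj] {K : ℕ}

lemma CR_self_mem_nbhd (u : V) : u ∈ nbhd G u := Finset.mem_insert_self u _

/-- Coverage of a vertex by a cop configuration: within distance one of some cop. -/
def CRcov (x : Fin K → V) (w : V) : Prop := ∃ j, w ∈ nbhd G (x j)

/-- Legality of a configuration move. -/
def CRleg (x x' : Fin K → V) : Prop := ∀ j, x' j ∈ nbhd G (x j)

/-- Positions from which the cops (to move) can force, within `k` cop-moves, a moment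
where a cop stands on the robber's current vertex (in the turn-based sense). -/
def CRcap : ℕ → Set (PosK V K)
  | 0 => {p | ∃ j, p.1 j = p.2}
  | (k+1) => CRcap k ∪ {p | ∃ x', CRleg G p.1 x' ∧
      ((∃ j, x' j = p.2) ∨ ∀ w ∈ nbhd G p.2, (x', w) ∈ CRcap k)}

def CRcapAll : Set (PosK V K) := ⋃ k, CRcap G k

/-- Safety levels for a "blind" robber: `CRW (k+1)` is the set of positions where the
robber has a move outside the cops' coverage whose every cop-successor lies in `CRW k`. -/
def CRW : ℕ → Set (PosK V K)
  | 0 => Set.univ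
  | (k+1) => {p | ∃ w ∈ nbhd G p.2, ¬ CRcov G p.1 w ∧
      ∀ x', CRleg G p.1 x' → (x', w) ∈ CRW k}

lemma CRcap_succ_subset (k : ℕ) : CRcap G (K := K) k ⊆ CRcap G (k+1) :=
  Set.subset_union_left

lemma CRcap_mono {k m : ℕ} (h : k ≤ m) : CRcap G (K := K) k ⊆ CRcap G m := by
  induction m with
  | zero => simpa [Nat.le_zero.mp h]
  | succ m ih =>
    rcases Nat.lt_or_ge k (m+1) with h'|h'
    · exact (ih (Nat.lt_succ_iff.mp h')).trans (CRcap_succ_subset G m)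
    · have : k = m + 1 := le_antisymm h h'
      simp [this]

lemma CRW_anti (k : ℕ) : CRW G (K := K) (k+1) ⊆ CRW G k := by
  induction k with
  | zero => simp [CRW]
  | succ k ih =>
    intro p hp
    obtain ⟨w, hw, hcov, hall⟩ := hp
    exact ⟨w, hw, hcov, fun x' hx' => ih (hall x' hx')⟩

/-- From a finite family all lying in the union of a monotone chain, get a common level. -/
lemma CR_chain_bound {α β : Type*} (C : ℕ → Set α) (hC : ∀ k, C k ⊆ C (k+1))
    (s : Finset β) (g : β → α) (h : ∀ b ∈ s, ∃ k, g b ∈ C k) :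
    ∃ k, ∀ b ∈ s, g b ∈ C k := by
  have hmono : ∀ {k m : ℕ}, k ≤ m → C k ⊆ C m := by
    intro k m hkm
    induction m with
    | zero => simpa [Nat.le_zero.mp hkm]
    | succ m ih =>
      rcases Nat.lt_or_ge k (m+1) with h'|h'
      · exact (ih (Nat.lt_succ_iff.mp h')).trans (hC m)
      · have : k = m + 1 := le_antisymm hkm h'
        simp [this]
  classical
  induction s using Finset.induction_on with
  | empty => exact ⟨0, by simp⟩
  | @insert b s hb ih =>
    obtain ⟨k1, hk1⟩ := ih (fun b hb => h b (Finset.mem_insert_of_mem hb))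
    obtain ⟨k2, hk2⟩ := h b (Finset.mem_insert_self b s)
    refine ⟨max k1 k2, fun c hc => ?_⟩
    rcases Finset.mem_insert.mp hc with rfl|hc
    · exact hmono (le_max_right _ _) hk2
    · exact hmono (le_max_left _ _) (hk1 c hc)

lemma CR_tbPos_zero (sc : TBCop V K) (sr : TBRob V K) :
    tbPos G sc sr 0 = (sc.1, sr.1 sc.1) := by
  simp [tbPos, tbPlay]

lemma CR_tbPos_succ (sc : TBCop V K) (sr : TBRob V K) (t : ℕ) :
    tbPos G sc sr (t+1) =
      ((fun i => if sc.2 (tbPlay G sc sr t) i ∈ nbhd G ((tbPos G sc sr t).1 i)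
          then sc.2 (tbPlay G sc sr t) i else (tbPos G sc sr t).1 i),
        if sr.2 (tbPlay G sc sr t)
            (fun i => if sc.2 (tbPlay G sc sr t) i ∈ nbhd G ((tbPos G sc sr t).1 i)
              then sc.2 (tbPlay G sc sr t) i else (tbPos G sc sr t).1 i)
            ∈ nbhd G (tbPos G sc sr t).2
        then sr.2 (tbPlay G sc sr t)
            (fun i => if sc.2 (tbPlay G sc sr t) i ∈ nbhd G ((tbPos G sc sr t).1 i)
              then sc.2 (tbPlay G sc sr t) i else (tbPos G sc sr t).1 i)
        else (tbPos G sc sr t).2) := by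
  conv_lhs => rw [tbPos, tbPlay]
  simp only [List.getLast?_concat, Option.getD_some]
  rfl

/-- Key lemma 1a: if the cops win the turn-based game, every starting position with the
cops at their canonical initial placement is a capture position. -/
lemma CRcapAll_init (sc : TBCop V K) (hwin : ∀ sr : TBRob V K, tbCaptured G sc sr) :
    ∀ y : V, (sc.1, y) ∈ CRcapAll G := by
  intro y
  by_contra hy
  classical
  have hesc : ∀ p : PosK V K, p ∉ CRcapAll G → ∀ x', CRleg G p.1 x' →
      (∀ j, x' j ≠ p.2) ∧ ∃ w ∈ nbhd G p.2, (x', w) ∉ CRcapAll G := by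
    intro p hp x' hx'
    constructor
    · intro j hj
      exact hp (Set.mem_iUnion.mpr ⟨1, Set.mem_union_right _ ⟨x', hx', Or.inl ⟨j, hj⟩⟩⟩)
    · by_contra hw
      push_neg at hw
      have hall : ∀ w ∈ nbhd G p.2, ∃ m, (x', w) ∈ CRcap G m := by
        intro w hwmem
        exact Set.mem_iUnion.mp (hw w hwmem)
      obtain ⟨m, hm⟩ := CR_chain_bound (CRcap G (K := K)) (CRcap_succ_subset G)
        (nbhd G p.2) (fun w => (x', w)) hall
      exact hp (Set.mem_iUnion.mpr ⟨m+1, Set.mem_union_right _ ⟨x', hx', Or.inr hm⟩⟩)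
  let esc : PosK V K → (Fin K → V) → V := fun p x' =>
    if h : p ∉ CRcapAll G ∧ CRleg G p.1 x' then ((hesc p h.1 x' h.2).2).choose else p.2
  have hesc1 : ∀ p x', ∀ (h1 : p ∉ CRcapAll G), ∀ (h2 : CRleg G p.1 x'),
      esc p x' ∈ nbhd G p.2 ∧ (x', esc p x') ∉ CRcapAll G := by
    intro p x' h1 h2
    have hdef : esc p x' = ((hesc p h1 x' h2).2).choose := dif_pos ⟨h1, h2⟩
    rw [hdef]
    exact ((hesc p h1 x' h2).2).choose_spec
  set sr : TBRob V K := (fun _ => y, fun h x' => esc (h.getLast?.getD (sc.1, y)) x') with hsr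
  have hpos0 : tbPos G sc sr 0 = (sc.1, y) := CR_tbPos_zero G sc sr
  have hinv : ∀ t, tbPos G sc sr t ∉ CRcapAll G := by
    intro t
    induction t with
    | zero => rw [hpos0]; exact hy
    | succ t ih =>
      have h1 := CR_tbPos_succ G sc sr t
      set h' := tbPlay G sc sr t with hh
      set p := tbPos G sc sr t with hp
      set C : Fin K → V :=
        fun i => if sc.2 h' i ∈ nbhd G (p.1 i) then sc.2 h' i else p.1 i with hCdef
      have hleg : CRleg G p.1 C := by
        intro i
        simp only [hCdef]
        split
        · assumption
        · exact CR_self_mem_nbhd G _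
      have hrob : sr.2 h' C = esc p C := by
        have : h'.getLast?.getD (sc.1, y) = p := rfl
        simp only [hsr, this]
      have hspec := hesc1 p C ih hleg
      rw [h1, hrob, if_pos hspec.1]
      exact hspec.2
  obtain ⟨t, i, hcap⟩ := hwin sr
  rcases hcap with hcap | hcap
  · exact hinv t (Set.mem_iUnion.mpr ⟨0, ⟨i, hcap⟩⟩)
  · have h1 := CR_tbPos_succ G sc sr t
    set h' := tbPlay G sc sr t with hh
    set p := tbPos G sc sr t with hp
    set C : Fin K → V :=
      fun i => if sc.2 h' i ∈ nbhd G (p.1 i) then sc.2 h' i else p.1 i with hCdef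
    have hleg : CRleg G p.1 C := by
      intro i
      simp only [hCdef]
      split
      · assumption
      · exact CR_self_mem_nbhd G _
    have hfst : (tbPos G sc sr (t+1)).1 = C := by rw [h1]
    rw [hfst] at hcap
    exact (hesc p (hinv t) C hleg).1 i hcap

/-- Key lemma 1b: capture positions propagate to all positions (using connectivity). -/
lemma CRcapAll_univ (hconn : G.Connected)
    (sc : TBCop V K) (hwin : ∀ sr : TBRob V K, tbCaptured G sc sr) :
    ∀ p : PosK V K, p ∈ CRcapAll G := by
  have h0 : ∀ y, (sc.1, y) ∈ CRcapAll G := CRcapAll_init G sc hwin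
  have hstep : ∀ x0 x1 : Fin K → V, (∀ y, (x0, y) ∈ CRcapAll G) → CRleg G x1 x0 →
      ∀ y, (x1, y) ∈ CRcapAll G := by
    intro x0 x1 hx0 hleg y
    have hall : ∀ w ∈ nbhd G y, ∃ m, (x0, w) ∈ CRcap G m := fun w _ =>
      Set.mem_iUnion.mp (hx0 w)
    obtain ⟨m, hm⟩ := CR_chain_bound (CRcap G (K := K)) (CRcap_succ_subset G)
      (nbhd G y) (fun w => (x0, w)) hall
    exact Set.mem_iUnion.mpr ⟨m+1, Set.mem_union_right _ ⟨x0, hleg, Or.inr hm⟩⟩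
  rintro ⟨x, yv⟩
  have hwalk : ∀ j, Nonempty (G.Walk (x j) (sc.1 j)) := fun j => hconn (x j) (sc.1 j)
  let w : ∀ j, G.Walk (x j) (sc.1 j) := fun j => (hwalk j).some
  set L := Finset.univ.sup (fun j => (w j).length) with hL
  have hz : ∀ m : ℕ, ∀ y, ((fun j => (w j).getVert (L - m)), y) ∈ CRcapAll G := by
    intro m
    induction m with
    | zero =>
      intro y
      have he : (fun j => (w j).getVert (L - 0)) = sc.1 := by
        funext j
        exact (w j).getVert_of_length_le
          (by simpa using Finset.le_sup (f := fun j => (w j).length) (Finset.mem_univ j))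
      rw [he]; exact h0 y
    | succ m ih =>
      intro y
      apply hstep _ _ ih _ y
      intro j
      dsimp only
      rcases Nat.lt_or_ge L (m+1) with hmL | hmL
      · have he : L - m = L - (m+1) := by omega
        rw [he]; exact CR_self_mem_nbhd G _
      · have he : L - m = (L - (m+1)) + 1 := by omega
        rcases Nat.lt_or_ge (L - (m+1)) ((w j).length) with hlt | hge
        · rw [he]
          have hadj := (w j).adj_getVert_succ hlt
          exact Finset.mem_insert_of_mem ((SimpleGraph.mem_neighborFinset _ _ _).mpr hadj)
        · have h1 : (w j).getVert (L - (m+1)) = sc.1 j := (w j).getVert_of_length_le hge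
          have h2 : (w j).getVert (L - m) = sc.1 j := (w j).getVert_of_length_le (by omega)
          rw [h1, h2]; exact CR_self_mem_nbhd G _
  have := hz L yv
  have he : (fun j => (w j).getVert (L - L)) = x := by
    funext j
    simp [SimpleGraph.Walk.getVert_zero]
  rwa [he] at this

/-- Key lemma 2: if every position is a capture position, the blind-safety levels die out. -/
lemma CRW_empty (hcap : ∀ p : PosK V K, p ∈ CRcapAll G) :
    ∃ R, CRW G (K := K) R = ∅ := by
  have hanti : ∀ k, CRW G (K := K) (k+1) ⊆ CRW G k := CRW_anti G
  have hstab : ∃ k, CRW G (K := K) (k+1) = CRW G k := by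
    by_contra hs
    push_neg at hs
    have hlt : ∀ k, (CRW G (K := K) (k+1)).ncard < (CRW G (K := K) k).ncard := by
      intro k
      exact Set.ncard_lt_ncard (ssubset_of_subset_of_ne (hanti k) (hs k)) (Set.toFinite _)
    have hle : ∀ k, (CRW G (K := K) k).ncard + k ≤ (CRW G (K := K) 0).ncard := by
      intro k
      induction k with
      | zero => simp
      | succ k ih => have := hlt k; omega
    have := hle ((CRW G (K := K) 0).ncard + 1)
    omega
  obtain ⟨k, hk⟩ := hstab
  refine ⟨k, ?_⟩
  by_contra hne
  rw [← Ne, ← Set.nonempty_iff_ne_empty] at hne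
  have hfix : ∀ p ∈ CRW G (K := K) k, ∃ w ∈ nbhd G p.2, ¬ CRcov G p.1 w ∧
      ∀ x', CRleg G p.1 x' → (x', w) ∈ CRW G (K := K) k := by
    intro p hp
    have hp' : p ∈ CRW G (K := K) (k+1) := by rw [hk]; exact hp
    obtain ⟨w, hw, hc, ha⟩ := hp'
    exact ⟨w, hw, hc, ha⟩
  have hDcap : ∀ m, ∀ p : PosK V K,
      (¬ CRcov G p.1 p.2 ∧ ∀ x', CRleg G p.1 x' → (x', p.2) ∈ CRW G (K := K) k) →
      p ∉ CRcap G m := by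
    intro m
    induction m with
    | zero =>
      rintro p ⟨hcov, -⟩ ⟨j, hj⟩
      exact hcov ⟨j, by rw [← hj]; exact CR_self_mem_nbhd G _⟩
    | succ m ih =>
      rintro p hpD hpc
      rcases hpc with hpc | ⟨x', hleg, hx'⟩
      · exact ih p hpD hpc
      rcases hx' with ⟨j, hj⟩ | hall
      · exact hpD.1 ⟨j, by rw [← hj]; exact hleg j⟩
      · have hS' : (x', p.2) ∈ CRW G (K := K) k := hpD.2 x' hleg
        obtain ⟨w, hw, hc, ha⟩ := hfix _ hS'
        exact ih (x', w) ⟨hc, ha⟩ (hall w hw)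
  obtain ⟨p, hp⟩ := hne
  obtain ⟨w, hw, hc, ha⟩ := hfix p hp
  obtain ⟨m, hm⟩ := Set.mem_iUnion.mp (hcap (p.1, w))
  exact hDcap m (p.1, w) ⟨hc, ha⟩ hm

/-! #### The concurrent side -/

/-- Current position determined by a history. -/
def CRpos (init : PosK V K) (h : List (PosK V K)) : PosK V K := h.getLast?.getD init

/-- The uniformly random cop strategy. -/
def CRunif [Nonempty V] : CCCop V K := fun _ => PMF.uniformOfFintype (Fin K → V)

/-- One round of the concurrent game under the uniform cop strategy. -/
def CRstep [Nonempty V] (πR : CCRob V K) (init : PosK V K) (h : List (PosK V K)) :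
    PMF (List (PosK V K)) :=
  (CRunif (V := V) (K := K) h).bind fun u => (πR h).bind fun w =>
    PMF.pure (h ++ [ccStep G (CRpos init h) u w])

/-- `m` further rounds of the concurrent game starting from a given history. -/
def CRcont [Nonempty V] (πR : CCRob V K) (init : PosK V K) :
    ℕ → List (PosK V K) → PMF (List (PosK V K))
  | 0 => fun h => PMF.pure h
  | (m+1) => fun h => (CRcont πR init m h).bind (CRstep G πR init)

/-- The capture-free histories. -/
def CRFree (init : PosK V K) : Set (List (PosK V K)) :=
  {h | ∀ i, (CRpos (K := K) init h).1 i ≠ (CRpos init h).2}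

/-- Probability of remaining free for `m` further rounds after history `h`. -/
def CRFF [Nonempty V] (πR : CCRob V K) (init : PosK V K) (m : ℕ) (h : List (PosK V K)) :
    ENNReal :=
  (CRcont G πR init m h).toOuterMeasure (CRFree init)

section CRprob

variable [Nonempty V] (πR : CCRob V K) (init : PosK V K)

lemma CR_pos_concat (h : List (PosK V K)) (q : PosK V K) :
    CRpos (K := K) init (h ++ [q]) = q := by
  simp [CRpos, List.getLast?_concat]

lemma CR_ccPlay_bind (t m : ℕ) :
    ccPlay G (CRunif (V := V) (K := K)) πR init (t + m) =
      (ccPlay G (CRunif (V := V) (K := K)) πR init t).bind (CRcont G πR init m) := by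
  induction m with
  | zero => simp [CRcont, PMF.bind_pure]
  | succ m ih =>
    have h1 : ccPlay G (CRunif (V := V) (K := K)) πR init (t + (m+1)) =
        (ccPlay G (CRunif (V := V) (K := K)) πR init (t + m)).bind (CRstep G πR init) := rfl
    rw [h1, ih, PMF.bind_bind]
    rfl

lemma CR_cont_succ_front (m : ℕ) (h : List (PosK V K)) :
    CRcont G πR init (m+1) h = (CRstep G πR init h).bind (CRcont G πR init m) := by
  induction m generalizing h with
  | zero =>
    show (PMF.pure h).bind (CRstep G πR init) = _
    rw [PMF.pure_bind]
    exact (PMF.bind_pure _).symm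
  | succ m ih =>
    show (CRcont G πR init (m+1) h).bind (CRstep G πR init) = _
    rw [ih, PMF.bind_bind]
    rfl

lemma CR_step_support {h h' : List (PosK V K)}
    (hmem : h' ∈ (CRstep G πR init h).support) :
    ∃ u w, h' = h ++ [ccStep G (CRpos init h) u w] := by
  simp only [CRstep, PMF.support_bind, PMF.support_pure, Set.mem_iUnion] at hmem
  obtain ⟨u, -, w, -, hw⟩ := hmem
  exact ⟨u, w, hw⟩

lemma CR_captured_absorb {p : PosK V K} (hcap : ∃ i, p.1 i = p.2) (u : Fin K → V) (w : V) :
    ccStep G p u w = p := by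
  rw [ccStep, if_pos hcap]

lemma CR_cont_captured (m : ℕ) (h : List (PosK V K))
    (hcap : ∃ i, (CRpos init h).1 i = (CRpos init h).2) :
    ∀ h' ∈ (CRcont G πR init m h).support, CRpos (K := K) init h' = CRpos init h := by
  induction m generalizing h with
  | zero =>
    intro h' hm
    simp only [CRcont, PMF.support_pure, Set.mem_singleton_iff] at hm
    rw [hm]
  | succ m ih =>
    intro h' hm
    rw [CR_cont_succ_front] at hm
    simp only [PMF.support_bind, Set.mem_iUnion] at hm
    obtain ⟨g, hg, hmem⟩ := hm
    obtain ⟨u, w, rfl⟩ := CR_step_support G πR init hg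
    have hpg : CRpos (K := K) init (h ++ [ccStep G (CRpos init h) u w]) = CRpos init h := by
      rw [CR_pos_concat, CR_captured_absorb G hcap]
    have hres := ih (h ++ [ccStep G (CRpos init h) u w]) (by rw [hpg]; exact hcap) h' hmem
    rw [hres, hpg]

lemma CR_FF_le_one (m : ℕ) (h : List (PosK V K)) : CRFF G πR init m h ≤ 1 := by
  rw [CRFF, PMF.toOuterMeasure_apply]
  calc ∑' x, (CRFree (K := K) init).indicator (CRcont G πR init m h) x
      ≤ ∑' x, (CRcont G πR init m h) x :=
        ENNReal.tsum_le_tsum fun x => Set.indicator_le_self _ _ x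
    _ = 1 := (CRcont G πR init m h).tsum_coe

lemma CR_FF_captured (m : ℕ) (h : List (PosK V K))
    (hcap : ∃ i, (CRpos init h).1 i = (CRpos init h).2) :
    CRFF G πR init m h = 0 := by
  rw [CRFF, PMF.toOuterMeasure_apply_eq_zero_iff]
  rw [Set.disjoint_left]
  intro h' hh' hfree
  have heq := CR_cont_captured G πR init m h hcap h' hh'
  obtain ⟨i, hi⟩ := hcap
  exact hfree i (by rw [heq]; exact hi)

lemma CR_FF_succ (m : ℕ) (h : List (PosK V K)) :
    CRFF G πR init (m+1) h =
      ∑' u : Fin K → V, PMF.uniformOfFintype (Fin K → V) u *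
        ∑' w : V, πR h w * CRFF G πR init m (h ++ [ccStep G (CRpos init h) u w]) := by
  have hrw : (CRstep G πR init h).bind (CRcont G πR init m) =
      (PMF.uniformOfFintype (Fin K → V)).bind fun u => (πR h).bind fun w =>
        CRcont G πR init m (h ++ [ccStep G (CRpos init h) u w]) := by
    simp only [CRstep, CRunif, PMF.bind_bind, PMF.pure_bind]
  rw [CRFF, CR_cont_succ_front, hrw, PMF.toOuterMeasure_bind_apply]
  refine tsum_congr fun u => ?_
  rw [PMF.toOuterMeasure_bind_apply]
  rfl

lemma CR_FF_succ' (m : ℕ) (h : List (PosK V K)) :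
    CRFF G πR init (m+1) h =
      ∑' w : V, πR h w * ∑' u : Fin K → V, PMF.uniformOfFintype (Fin K → V) u *
          CRFF G πR init m (h ++ [ccStep G (CRpos init h) u w]) := by
  rw [CR_FF_succ]
  calc ∑' u : Fin K → V, PMF.uniformOfFintype (Fin K → V) u *
        ∑' w : V, πR h w * CRFF G πR init m (h ++ [ccStep G (CRpos init h) u w])
      = ∑' (u : Fin K → V) (w : V), PMF.uniformOfFintype (Fin K → V) u *
          (πR h w * CRFF G πR init m (h ++ [ccStep G (CRpos init h) u w])) :=
        tsum_congr fun u => ENNReal.tsum_mul_left.symm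
    _ = ∑' (w : V) (u : Fin K → V), PMF.uniformOfFintype (Fin K → V) u *
          (πR h w * CRFF G πR init m (h ++ [ccStep G (CRpos init h) u w])) :=
        ENNReal.tsum_comm
    _ = ∑' (w : V) (u : Fin K → V), πR h w * (PMF.uniformOfFintype (Fin K → V) u *
          CRFF G πR init m (h ++ [ccStep G (CRpos init h) u w])) := by
        refine tsum_congr fun w => tsum_congr fun u => ?_
        ring
    _ = ∑' w : V, πR h w * ∑' u : Fin K → V, PMF.uniformOfFintype (Fin K → V) u *
          CRFF G πR init m (h ++ [ccStep G (CRpos init h) u w]) :=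
        tsum_congr fun w => ENNReal.tsum_mul_left

lemma CR_ccStep_cov {p : PosK V K} (hfree : ¬∃ i, p.1 i = p.2) (w : V)
    (hcov : CRcov G p.1 (if w ∈ nbhd G p.2 then w else p.2)) :
    ∃ i, (ccStep G p (fun i => if (if w ∈ nbhd G p.2 then w else p.2) ∈ nbhd G (p.1 i)
            then (if w ∈ nbhd G p.2 then w else p.2) else p.1 i) w).1 i =
         (ccStep G p (fun i => if (if w ∈ nbhd G p.2 then w else p.2) ∈ nbhd G (p.1 i)
            then (if w ∈ nbhd G p.2 then w else p.2) else p.1 i) w).2 := by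
  set w'' := if w ∈ nbhd G p.2 then w else p.2 with hw''
  set ustar : Fin K → V := fun i => if w'' ∈ nbhd G (p.1 i) then w'' else p.1 i with hustar
  have hclamp : (fun i => if ustar i ∈ nbhd G (p.1 i) then ustar i else p.1 i) = ustar := by
    funext i
    by_cases hi : w'' ∈ nbhd G (p.1 i)
    · have : ustar i = w'' := by rw [hustar]; simp [hi]
      rw [this, if_pos hi]
    · have : ustar i = p.1 i := by rw [hustar]; simp [hi]
      rw [this, if_pos (CR_self_mem_nbhd G _)]
  have hclampi : ∀ i, (if ustar i ∈ nbhd G (p.1 i) then ustar i else p.1 i) = ustar i :=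
    fun i => congrFun hclamp i
  rw [ccStep, if_neg hfree]
  simp only [hclamp, hclampi]
  by_cases hep : ∃ i, ustar i = p.2 ∧ (if w ∈ nbhd G p.2 then w else p.2) = p.1 i
  · rw [if_pos hep]
    obtain ⟨i, hi1, _⟩ := hep
    exact ⟨i, hi1⟩
  · rw [if_neg hep]
    obtain ⟨j, hj⟩ := hcov
    refine ⟨j, ?_⟩
    show ustar j = _
    rw [hustar]
    simp only [hw''] at hj ⊢
    rw [if_pos hj]

lemma CR_ccStep_esc {p : PosK V K} (hfree : ¬∃ i, p.1 i = p.2) (w : V) (x' : Fin K → V)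
    (hleg : CRleg G p.1 x')
    (hcov : ¬ CRcov G p.1 (if w ∈ nbhd G p.2 then w else p.2)) :
    ccStep G p x' w = (x', if w ∈ nbhd G p.2 then w else p.2) := by
  have hclamp : (fun i => if x' i ∈ nbhd G (p.1 i) then x' i else p.1 i) = x' := by
    funext i
    rw [if_pos (hleg i)]
  have hclampi : ∀ i, (if x' i ∈ nbhd G (p.1 i) then x' i else p.1 i) = x' i :=
    fun i => congrFun hclamp i
  rw [ccStep, if_neg hfree]
  simp only [hclamp, hclampi]
  rw [if_neg]
  rintro ⟨i, -, hi2⟩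
  exact hcov ⟨i, by rw [hi2]; exact CR_self_mem_nbhd G _⟩

lemma CR_main (k : ℕ) (h : List (PosK V K)) (hp : CRpos init h ∉ CRW G k) :
    CRFF G πR init k h + ((Fintype.card (Fin K → V) : ENNReal))⁻¹ ^ k ≤ 1 := by
  haveI : Nonempty (Fin K → V) := ⟨fun _ => Classical.arbitrary V⟩
  set c0 : ENNReal := ((Fintype.card (Fin K → V) : ENNReal))⁻¹ with hc0
  have hcard1 : (1 : ENNReal) ≤ (Fintype.card (Fin K → V) : ENNReal) := by
    exact_mod_cast Nat.one_le_iff_ne_zero.mpr Fintype.card_ne_zero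
  have hc0le1 : c0 ≤ 1 := by
    rw [hc0]
    exact ENNReal.inv_le_one.mpr hcard1
  induction k generalizing h with
  | zero => exact absurd (Set.mem_univ _) hp
  | succ k ih =>
    by_cases hcap : ∃ i, (CRpos init h).1 i = (CRpos init h).2
    · rw [CR_FF_captured G πR init _ h hcap, zero_add]
      exact pow_le_one' hc0le1 _
    · have hnW : ∀ w'', w'' ∈ nbhd G (CRpos init h).2 → ¬ CRcov G (CRpos init h).1 w'' →
          ∃ x', CRleg G (CRpos init h).1 x' ∧ (x', w'') ∉ CRW G k := by
        intro w'' h1 h2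
        by_contra hx
        push_neg at hx
        exact hp ⟨w'', h1, h2, fun x' hlg => hx x' hlg⟩
      have hgood : ∀ w : V, ∃ ustar : Fin K → V,
          CRFF G πR init k (h ++ [ccStep G (CRpos init h) ustar w]) + c0 ^ k ≤ 1 := by
        intro w
        have hw''mem : (if w ∈ nbhd G (CRpos init h).2 then w else (CRpos init h).2)
            ∈ nbhd G (CRpos init h).2 := by
          split
          · assumption
          · exact CR_self_mem_nbhd G _
        by_cases hcov : CRcov G (CRpos init h).1
            (if w ∈ nbhd G (CRpos init h).2 then w else (CRpos init h).2)
        · refine ⟨fun i => if (if w ∈ nbhd G (CRpos init h).2 then w else (CRpos init h).2)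
              ∈ nbhd G ((CRpos init h).1 i)
              then (if w ∈ nbhd G (CRpos init h).2 then w else (CRpos init h).2)
              else (CRpos init h).1 i, ?_⟩
          have hcapnew := CR_ccStep_cov G hcap w hcov
          rw [CR_FF_captured G πR init k _ (by rwa [CR_pos_concat])]
          rw [zero_add]
          exact pow_le_one' hc0le1 _
        · obtain ⟨x', hleg, hnw⟩ := hnW _ hw''mem hcov
          refine ⟨x', ?_⟩
          rw [CR_ccStep_esc G hcap w x' hleg hcov]
          exact ih _ (by rwa [CR_pos_concat])
      -- summation arithmetic
      have hA : ∀ u : Fin K → V, PMF.uniformOfFintype (Fin K → V) u = c0 := fun u => by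
        rw [PMF.uniformOfFintype_apply, hc0]
      have hXle1 : ∀ u w, CRFF G πR init k (h ++ [ccStep G (CRpos init h) u w]) ≤ 1 :=
        fun u w => CR_FF_le_one G πR init k _
      have htot : ∑' _u : Fin K → V, c0 = 1 := by
        have h1 : ∑' u : Fin K → V, PMF.uniformOfFintype (Fin K → V) u = 1 :=
          (PMF.uniformOfFintype (Fin K → V)).tsum_coe
        rw [tsum_congr hA] at h1
        exact h1
      have hI : ∀ w : V,
          (∑' u : Fin K → V, PMF.uniformOfFintype (Fin K → V) u *
            CRFF G πR init k (h ++ [ccStep G (CRpos init h) u w])) + c0 ^ (k+1) ≤ 1 := by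
        intro w
        obtain ⟨ustar, hustar⟩ := hgood w
        set X : (Fin K → V) → ENNReal :=
          fun u => CRFF G πR init k (h ++ [ccStep G (CRpos init h) u w]) with hX
        have hsplit : ∑' u : Fin K → V, PMF.uniformOfFintype (Fin K → V) u * X u =
            c0 * X ustar + ∑' u : Fin K → V, (if u = ustar then 0 else c0 * X u) := by
          rw [tsum_congr (fun u => by rw [hA u])]
          convert ENNReal.tsum_eq_add_tsum_ite (f := fun u => c0 * X u) ustar
        have hT : (∑' u : Fin K → V, (if u = ustar then 0 else c0 * X u)) ≤
            ∑' u : Fin K → V, (if u = ustar then 0 else c0) := by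
          refine ENNReal.tsum_le_tsum fun u => ?_
          split
          · exact le_rfl
          · exact mul_le_of_le_one_right zero_le (hXle1 u w)
        have hsplit2 : c0 + (∑' u : Fin K → V, (if u = ustar then 0 else c0)) = 1 := by
          rw [← htot]
          convert (ENNReal.tsum_eq_add_tsum_ite (f := fun _ : Fin K → V => c0) ustar).symm
        have hkey : c0 * X ustar + c0 ^ (k+1) ≤ c0 := by
          have : c0 * X ustar + c0 ^ (k+1) = c0 * (X ustar + c0 ^ k) := by
            rw [mul_add, pow_succ, mul_comm (c0 ^ k) c0]
          rw [this]
          calc c0 * (X ustar + c0 ^ k) ≤ c0 * 1 := mul_le_mul_right hustar c0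
            _ = c0 := mul_one c0
        calc (∑' u : Fin K → V, PMF.uniformOfFintype (Fin K → V) u * X u) + c0 ^ (k+1)
            = (c0 * X ustar + c0 ^ (k+1)) +
                ∑' u : Fin K → V, (if u = ustar then 0 else c0 * X u) := by
              rw [hsplit]; ring
          _ ≤ c0 + ∑' u : Fin K → V, (if u = ustar then 0 else c0) := add_le_add hkey hT
          _ = 1 := hsplit2
      rw [CR_FF_succ']
      have hBsum : ∑' w : V, πR h w * c0 ^ (k+1) = c0 ^ (k+1) := by
        rw [ENNReal.tsum_mul_right, (πR h).tsum_coe, one_mul]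
      calc (∑' w : V, πR h w * ∑' u : Fin K → V, PMF.uniformOfFintype (Fin K → V) u *
              CRFF G πR init k (h ++ [ccStep G (CRpos init h) u w])) + c0 ^ (k+1)
          = ∑' w : V, (πR h w * (∑' u : Fin K → V, PMF.uniformOfFintype (Fin K → V) u *
              CRFF G πR init k (h ++ [ccStep G (CRpos init h) u w])) + πR h w * c0 ^ (k+1)) := by
            rw [ENNReal.tsum_add, hBsum]
        _ = ∑' w : V, πR h w * ((∑' u : Fin K → V, PMF.uniformOfFintype (Fin K → V) u *
              CRFF G πR init k (h ++ [ccStep G (CRpos init h) u w])) + c0 ^ (k+1)) := by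
            refine tsum_congr fun w => ?_
            rw [mul_add]
        _ ≤ ∑' w : V, πR h w * 1 := ENNReal.tsum_le_tsum fun w => mul_le_mul_right (hI w) _
        _ = 1 := by
            simp only [mul_one]
            exact (πR h).tsum_coe

end CRprob


/-- Key lemma 3: if the blind-safety levels die out, the uniformly random cops win the
concurrent game. -/
lemma CR_ccCopWin (hconn : G.Connected) (hW : ∃ R, CRW G (K := K) R = ∅) :
    ccCopWin G K := by
  haveI hV : Nonempty V := hconn.nonempty
  haveI : Nonempty (Fin K → V) := ⟨fun _ => Classical.arbitrary V⟩
  obtain ⟨R, hR⟩ := hW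
  refine ⟨CRunif (V := V) (K := K), ?_⟩
  intro init πR
  set c0 : ENNReal := ((Fintype.card (Fin K → V) : ENNReal))⁻¹ with hc0
  have hcard1 : (1 : ENNReal) ≤ (Fintype.card (Fin K → V) : ENNReal) := by
    exact_mod_cast Nat.one_le_iff_ne_zero.mpr Fintype.card_ne_zero
  have hc0le1 : c0 ≤ 1 := by
    rw [hc0]
    exact ENNReal.inv_le_one.mpr hcard1
  have hc0ne0 : c0 ≠ 0 := by
    rw [hc0]
    exact ENNReal.inv_ne_zero.mpr (ENNReal.natCast_ne_top _)
  set a : ENNReal := 1 - c0 ^ R with ha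
  have hFFR : ∀ h : List (PosK V K), CRFF G πR init R h ≤ a := by
    intro h
    have hnot : CRpos init h ∉ CRW G R := by rw [hR]; exact Set.notMem_empty _
    have hmain := CR_main G πR init R h hnot
    refine ENNReal.le_sub_of_add_le_right ?_ hmain
    exact ((pow_le_one' hc0le1 R).trans_lt ENNReal.one_lt_top).ne
  have hset : {h : List (PosK V K) |
      ∀ i, (h.getLast?.getD init).1 i ≠ (h.getLast?.getD init).2} = CRFree (K := K) init := rfl
  have hwindow : ∀ t, ccFreeProb G (CRunif (V := V) (K := K)) πR init (t + R) ≤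
      a * ccFreeProb G (CRunif (V := V) (K := K)) πR init t := by
    intro t
    have h1 : ccFreeProb G (CRunif (V := V) (K := K)) πR init (t + R) =
        ∑' h, (ccPlay G (CRunif (V := V) (K := K)) πR init t) h * CRFF G πR init R h := by
      rw [ccFreeProb, CR_ccPlay_bind G πR init t R, PMF.toOuterMeasure_bind_apply]
      refine tsum_congr fun g => ?_
      rw [hset]
      rfl
    have h2 : ccFreeProb G (CRunif (V := V) (K := K)) πR init t =
        ∑' h, (ccPlay G (CRunif (V := V) (K := K)) πR init t) h *
          (CRFree (K := K) init).indicator 1 h := by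
      rw [ccFreeProb, PMF.toOuterMeasure_apply]
      refine tsum_congr fun h => ?_
      rw [hset]
      by_cases hh : h ∈ CRFree (K := K) init
      · rw [Set.indicator_of_mem hh, Set.indicator_of_mem hh, Pi.one_apply, mul_one]
      · rw [Set.indicator_of_notMem hh, Set.indicator_of_notMem hh, mul_zero]
    rw [h1, h2, ← ENNReal.tsum_mul_left]
    refine ENNReal.tsum_le_tsum fun h => ?_
    by_cases hh : h ∈ CRFree (K := K) init
    · rw [Set.indicator_of_mem hh, Pi.one_apply]
      calc (ccPlay G (CRunif (V := V) (K := K)) πR init t) h * CRFF G πR init R h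
          ≤ (ccPlay G (CRunif (V := V) (K := K)) πR init t) h * a :=
            mul_le_mul_right (hFFR h) _
        _ = a * ((ccPlay G (CRunif (V := V) (K := K)) πR init t) h * 1) := by ring
    · rw [Set.indicator_of_notMem hh]
      have hcapt : ∃ i, (CRpos init h).1 i = (CRpos init h).2 := by
        by_contra hc
        push_neg at hc
        exact hh hc
      rw [CR_FF_captured G πR init R h hcapt]
      simp
  have hle1 : ∀ t, ccFreeProb G (CRunif (V := V) (K := K)) πR init t ≤ 1 := by
    intro t
    rw [ccFreeProb, PMF.toOuterMeasure_apply]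
    calc ∑' x, Set.indicator _ (ccPlay G (CRunif (V := V) (K := K)) πR init t) x
        ≤ ∑' x, (ccPlay G (CRunif (V := V) (K := K)) πR init t) x :=
          ENNReal.tsum_le_tsum fun x => Set.indicator_le_self _ _ x
      _ = 1 := PMF.tsum_coe _
  have hiter : ∀ n : ℕ, ccFreeProb G (CRunif (V := V) (K := K)) πR init (R * n) ≤ a ^ n := by
    intro n
    induction n with
    | zero => simpa using hle1 0
    | succ n ih =>
      have hRsplit : R * (n+1) = R * n + R := by ring
      rw [hRsplit]
      calc ccFreeProb G (CRunif (V := V) (K := K)) πR init (R * n + R)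
          ≤ a * ccFreeProb G (CRunif (V := V) (K := K)) πR init (R * n) := hwindow _
        _ ≤ a * a ^ n := mul_le_mul_right ih a
        _ = a ^ (n+1) := by rw [pow_succ]; ring
  have halt : a < 1 := by
    rw [ha]
    exact ENNReal.sub_lt_self ENNReal.one_ne_top one_ne_zero (pow_ne_zero R hc0ne0)
  have htend : Filter.Tendsto (fun n : ℕ => a ^ n) Filter.atTop (nhds 0) :=
    ENNReal.tendsto_pow_atTop_nhds_zero_of_lt_one halt
  have hles : ∀ n : ℕ, (⨅ t : ℕ, ccFreeProb G (CRunif (V := V) (K := K)) πR init t) ≤ a ^ n :=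
    fun n => (iInf_le _ (R * n)).trans (hiter n)
  have hfin : (⨅ t : ℕ, ccFreeProb G (CRunif (V := V) (K := K)) πR init t) ≤ 0 :=
    ge_of_tendsto htend (Filter.Eventually.of_forall hles)
  exact le_antisymm hfin zero_le

end CRProof

/-- if the cop number `c(G)` equals `K > 0` then the concurrent cop
number satisfies `c̃(G) ≤ K`. -/
theorem ccopNumber_le_of_copNumber_eq (G : SimpleGraph V) [DecidableRel G.Adj]
    (hconn : G.Connected) (K : ℕ) (hK : 0 < K) (h : copNumber G = K) :
    ccopNumber G ≤ K := by
  have hne : {K' | tbCopWin G K'}.Nonempty := by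
    by_contra hemp
    rw [Set.not_nonempty_iff_eq_empty] at hemp
    rw [copNumber, hemp] at h
    simp at h
    omega
  have hmem : tbCopWin G K := by
    have h2 := Nat.sInf_mem hne
    rw [copNumber] at h
    rw [h] at h2
    exact h2
  obtain ⟨sc, hsc⟩ := hmem
  have hwin : ccCopWin G K :=
    CR_ccCopWin G hconn (CRW_empty G (CRcapAll_univ G hconn sc hsc))
  exact Nat.sInf_le hwin
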